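/- arXiv:1701.07914 — 2 statements merged into one kernel-verified Lean document; each statement's English description precedes it below -/
import Mathlib

section
/- Let (A,V) be a ρ-secure AMD coding scheme and (E,D) a coding scheme with the linearity property. Define Enc(s) = E(A(s)) and Dec(c) = ⊥ if D(c) = ⊥, else V(D(c)). Then for any fixed error Δ with D(Δ) ≠ ⊥ and D(Δ) ≠ 0, and any message s, Pr[Dec(Enc(s) + Δ) ≠ ⊥] ≤ ρ. -/
open scoped ENNReal

noncomputable def prob {α : Type*} (X : PMF α) (P : α → Prop) : ℝ≥0∞ :=
  X.toOuterMeasure {x | P x}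

/-- Linearity property of an LECSS decoder `D`. -/
def LECSSLinear {n k : ℕ} (D : (Fin n → ZMod 2) → Option (Fin k → ZMod 2)) : Prop :=
  ∀ c Δ : Fin n → ZMod 2, D c ≠ none →
    ((D Δ = none → D (c + Δ) = none) ∧
     (∀ mc mΔ : Fin k → ZMod 2, D c = some mc → D Δ = some mΔ →
        D (c + Δ) = some (mc + mΔ)))

/-- let `(A,V)` be a `ρ`-secure AMD code and `(E,D)` a coding scheme
with the linearity property.  Define `Enc s = E (A s)` and
`Dec c = ⊥ if D c = ⊥ else V (D c)`.  Then for any fixed error `Δ` with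
`D Δ ≠ ⊥` and `D Δ ≠ 0`, and any message `s`, `Pr[Dec (Enc s + Δ) ≠ ⊥] ≤ ρ`. -/
theorem amd_lecss_detects_decodable_error (k k' n : ℕ) (ρ : ℝ≥0∞)
    (A : (Fin k → ZMod 2) → PMF (Fin k' → ZMod 2))
    (V : (Fin k' → ZMod 2) → Option (Fin k → ZMod 2))
    (hAMD : ∀ m : Fin k → ZMod 2, ∀ Δ' : Fin k' → ZMod 2, Δ' ≠ 0 →
      prob (A m) (fun a => V (a + Δ') ≠ none) ≤ ρ)
    (E : (Fin k' → ZMod 2) → PMF (Fin n → ZMod 2))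
    (D : (Fin n → ZMod 2) → Option (Fin k' → ZMod 2))
    (hEcorrect : ∀ a c, c ∈ (E a).support → D c = some a)
    (hlin : LECSSLinear D)
    (Δ : Fin n → ZMod 2) (mΔ : Fin k' → ZMod 2)
    (hΔ : D Δ = some mΔ) (hΔ0 : mΔ ≠ 0)
    (s : Fin k → ZMod 2) :
    prob ((A s).bind E) (fun c => (D (c + Δ)).bind V ≠ none) ≤ ρ := by
  classical
  have hbind := PMF.toOuterMeasure_bind_apply (A s) E {c | (D (c + Δ)).bind V ≠ none}
  unfold prob
  rw [hbind]
  calc ∑' a, A s a * (E a).toOuterMeasure {c | (D (c + Δ)).bind V ≠ none}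
      ≤ ∑' a, Set.indicator {a | V (a + mΔ) ≠ none} (A s) a := by
        refine ENNReal.tsum_le_tsum fun a => ?_
        by_cases ha : A s a = 0
        · rw [ha, zero_mul]
          exact zero_le
        · have hsupp : a ∈ (A s).support := ha
          by_cases hQ : V (a + mΔ) ≠ none
          · rw [Set.indicator_of_mem (show a ∈ {a | V (a + mΔ) ≠ none} from hQ)]
            calc A s a * (E a).toOuterMeasure {c | (D (c + Δ)).bind V ≠ none}
                ≤ A s a * 1 := by
                  gcongr
                  rw [PMF.toOuterMeasure_apply]
                  calc ∑' c, Set.indicator {c | (D (c + Δ)).bind V ≠ none} (E a) c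
                      ≤ ∑' c, E a c := ENNReal.tsum_le_tsum fun c =>
                        Set.indicator_apply_le fun _ => le_rfl
                    _ = 1 := (E a).tsum_coe
              _ = A s a := mul_one _
          · rw [Set.indicator_of_notMem (show a ∉ {a | V (a + mΔ) ≠ none} from hQ)]
            have : (E a).toOuterMeasure {c | (D (c + Δ)).bind V ≠ none} = 0 := by
              rw [PMF.toOuterMeasure_apply_eq_zero_iff]
              rw [Set.disjoint_left]
              intro c hc hcP
              have hDc : D c = some a := hEcorrect a c hc
              have hlin' := (hlin c Δ (by simp [hDc])).2 a mΔ hDc hΔ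
              apply hcP
              simp only [Set.mem_setOf_eq] at *
              rw [hlin']
              exact not_not.mp hQ
            rw [this, mul_zero]
    _ = prob (A s) (fun a => V (a + mΔ) ≠ none) := by
        unfold prob
        rw [PMF.toOuterMeasure_apply]
    _ ≤ ρ := hAMD s mΔ hΔ0
end

section
/- Let n, t, d, p, r be natural numbers with t even, t > 6, r ≤ t < n/2, d > 3n/8, and t - r < p ≤ (n - r)/2. Let Δ be a random vector in {0,1}^n whose coordinates in a set of size p + r are t-wise independent uniform bits and whose remaining coordinates are fixed, and let δ* agree with Δ on the fixed coordinates. Then Pr[d_H(Δ, δ*) ≥ d] ≤ (t / (n (d/n - 3/8)^2))^{t/2}. -/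
open scoped ENNReal BigOperators

lemma prob_eq_sum {α : Type*} [Fintype α] (X : PMF α) (P : α → Prop) [DecidablePred P] :
    prob X P = ∑ x, if P x then X x else 0 := by
  rw [show prob X P = X.toOuterMeasure {x | P x} from rfl, PMF.toOuterMeasure_apply, tsum_fintype]
  refine Finset.sum_congr rfl fun x _ => ?_
  simp [Set.indicator_apply]

lemma prob_ne_top {α : Type*} [Fintype α] (X : PMF α) (P : α → Prop) : prob X P ≠ ⊤ := by
  classical
  rw [prob_eq_sum]
  simp only [ne_eq, ENNReal.sum_eq_top, not_exists]
  intro x h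
  rcases h with ⟨-, h⟩
  revert h
  split <;> simp [PMF.apply_ne_top]

lemma prob_toReal {α : Type*} [Fintype α] (X : PMF α) (P : α → Prop) [DecidablePred P] :
    (prob X P).toReal = ∑ x, if P x then (X x).toReal else 0 := by
  rw [prob_eq_sum, ENNReal.toReal_sum]
  · exact Finset.sum_congr rfl fun x _ => by split <;> simp
  · intro a _; split <;> simp [PMF.apply_ne_top]

/-- The centered `±1/2` variable attached to coordinate `i`. -/
noncomputable def Yv {n : ℕ} (δstar : Fin n → ZMod 2) (i : Fin n) (b : ZMod 2) : ℝ :=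
  if b = δstar i then -(1/2) else 1/2

lemma Yv_sum_pow {n : ℕ} (δstar : Fin n → ZMod 2) (i : Fin n) (mm : ℕ) :
    Yv δstar i 0 ^ mm + Yv δstar i 1 ^ mm = if Even mm then 2 * (1/2 : ℝ) ^ mm else 0 := by
  have h01 : δstar i = 0 ∨ δstar i = 1 := by
    have : ∀ z : ZMod 2, z = 0 ∨ z = 1 := by decide
    exact this _
  have h10 : (1 : ZMod 2) ≠ 0 := by decide
  have h02 : (0 : ZMod 2) ≠ 1 := by decide
  rcases h01 with h | h <;> rw [Yv, Yv, h] <;>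
    [ (rw [if_pos rfl, if_neg (by exact h10)]) ; (rw [if_neg h02, if_pos rfl]) ] <;>
    by_cases he : Even mm
  · rw [if_pos he, Even.neg_pow he]; ring
  · rw [if_neg he, Odd.neg_pow (Nat.not_even_iff_odd.1 he)]; ring
  · rw [if_pos he, Even.neg_pow he]; ring
  · rw [if_neg he, Odd.neg_pow (Nat.not_even_iff_odd.1 he)]; ring

/-- From `t`-wise independence: expectation of a product of per-coordinate functions over a
small subset of `T` factors into a product of averages. -/
lemma uniform_prod {n t : ℕ} (T : Finset (Fin n)) (Δ : PMF (Fin n → ZMod 2))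
    (hindep : ∀ S : Finset (Fin n), S ⊆ T → S.card ≤ t → ∀ v : Fin n → ZMod 2,
      prob Δ (fun x => ∀ i ∈ S, x i = v i) = (2 : ℝ≥0∞)⁻¹ ^ S.card)
    (S : Finset (Fin n)) (hST : S ⊆ T) (hcard : S.card ≤ t)
    (c : Fin n → ZMod 2 → ℝ) :
    ∑ x : Fin n → ZMod 2, (Δ x).toReal * ∏ i ∈ S, c i (x i)
      = (1/2 : ℝ) ^ S.card * ∏ i ∈ S, (c i 0 + c i 1) := by
  classical
  set V : Finset (Fin n → ZMod 2) :=
    Fintype.piFinset (fun i => if i ∈ S then (Finset.univ : Finset (ZMod 2)) else {0}) with hV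
  have step1 : ∀ x : Fin n → ZMod 2,
      ∏ i ∈ S, c i (x i)
        = ∑ v ∈ V, if (∀ i ∈ S, x i = v i) then ∏ i ∈ S, c i (v i) else 0 := by
    intro x
    have hmem : (fun i => if i ∈ S then x i else 0) ∈ V := by
      simp only [hV, Fintype.mem_piFinset]
      intro i
      split <;> simp
    rw [Finset.sum_eq_single_of_mem _ hmem]
    · rw [if_pos]
      · exact Finset.prod_congr rfl fun i hi => by simp [hi]
      · intro i hi; simp [hi]
    · intro v hv hne
      rw [if_neg]
      intro hall
      apply hne
      funext i
      by_cases hi : i ∈ S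
      · simp only [hi, if_true]
        exact (hall i hi).symm
      · simp only [hi, if_false]
        have h2 := Fintype.mem_piFinset.1 hv i
        rw [if_neg hi] at h2
        exact Finset.mem_singleton.1 h2
  calc ∑ x : Fin n → ZMod 2, (Δ x).toReal * ∏ i ∈ S, c i (x i)
      = ∑ x : Fin n → ZMod 2, ∑ v ∈ V,
          (if (∀ i ∈ S, x i = v i) then (Δ x).toReal else 0) * ∏ i ∈ S, c i (v i) := by
        refine Finset.sum_congr rfl fun x _ => ?_
        rw [step1 x, Finset.mul_sum]
        refine Finset.sum_congr rfl fun v _ => ?_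
        split <;> ring
    _ = ∑ v ∈ V, (∑ x : Fin n → ZMod 2, if (∀ i ∈ S, x i = v i) then (Δ x).toReal else 0)
          * ∏ i ∈ S, c i (v i) := by
        rw [Finset.sum_comm]
        simp [Finset.sum_mul]
    _ = ∑ v ∈ V, (1/2:ℝ)^S.card * ∏ i ∈ S, c i (v i) := by
        refine Finset.sum_congr rfl fun v _ => ?_
        congr 1
        rw [← prob_toReal, hindep S hST hcard v]
        simp [ENNReal.toReal_pow, ENNReal.toReal_inv]
    _ = (1/2:ℝ)^S.card * ∑ v ∈ V, ∏ i ∈ S, c i (v i) := by rw [Finset.mul_sum]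
    _ = (1/2 : ℝ) ^ S.card * ∏ i ∈ S, (c i 0 + c i 1) := by
        congr 1
        have key := Finset.prod_univ_sum
          (fun i => if i ∈ S then (Finset.univ : Finset (ZMod 2)) else {0})
          (fun i b => if i ∈ S then c i b else 1)
        rw [← hV] at key
        have lhs_eq : ∏ i : Fin n, (∑ b ∈ (if i ∈ S then (Finset.univ : Finset (ZMod 2)) else {0}),
            if i ∈ S then c i b else 1) = ∏ i ∈ S, (c i 0 + c i 1) := by
          have : ∀ i : Fin n, (∑ b ∈ (if i ∈ S then (Finset.univ : Finset (ZMod 2)) else {0}),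
              if i ∈ S then c i b else 1) = (if i ∈ S then c i 0 + c i 1 else 1) := by
            intro i
            by_cases hi : i ∈ S
            · simp only [hi, if_true]
              exact Fin.sum_univ_two (c i)
            · simp [hi]
          rw [Finset.prod_congr rfl fun i _ => this i, Finset.prod_ite_mem, Finset.univ_inter]
        have rhs_eq : ∀ v ∈ V, (∏ i : Fin n, if i ∈ S then c i (v i) else 1)
            = ∏ i ∈ S, c i (v i) := by
          intro v _
          rw [Finset.prod_ite_mem, Finset.univ_inter]
        calc ∑ v ∈ V, ∏ i ∈ S, c i (v i)
            = ∑ v ∈ V, ∏ i : Fin n, if i ∈ S then c i (v i) else 1 :=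
              Finset.sum_congr rfl fun v hv => (rhs_eq v hv).symm
          _ = ∏ i : Fin n, ∑ b ∈ (if i ∈ S then (Finset.univ : Finset (ZMod 2)) else {0}),
              if i ∈ S then c i b else 1 := key.symm
          _ = ∏ i ∈ S, (c i 0 + c i 1) := lhs_eq

lemma pow_le_eight_pow_mul_factorial : ∀ k : ℕ, (k:ℝ)^k ≤ 8^k * (k.factorial : ℝ) := by
  intro k
  induction k with
  | zero => norm_num
  | succ k ih =>
    rcases Nat.eq_zero_or_pos k with hk | hk
    · subst hk; norm_num
    have hk' : (0:ℝ) < k := by exact_mod_cast hk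
    have h1 : ((k:ℝ)+1)^k ≤ 8 * (k:ℝ)^k := by
      have h2 : ((k:ℝ)+1) ≤ (k:ℝ) * Real.exp (1/(k:ℝ)) := by
        have h3 := Real.add_one_le_exp (1/(k:ℝ))
        have h4 : (k:ℝ) * (1/(k:ℝ) + 1) ≤ (k:ℝ) * Real.exp (1/(k:ℝ)) :=
          mul_le_mul_of_nonneg_left h3 hk'.le
        calc (k:ℝ)+1 = (k:ℝ) * (1/(k:ℝ) + 1) := by field_simp; ring
          _ ≤ (k:ℝ) * Real.exp (1/(k:ℝ)) := h4
      calc ((k:ℝ)+1)^k ≤ ((k:ℝ) * Real.exp (1/(k:ℝ)))^k :=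
            pow_le_pow_left₀ (by positivity) h2 k
        _ = (k:ℝ)^k * Real.exp (1/(k:ℝ))^k := mul_pow _ _ _
        _ = (k:ℝ)^k * Real.exp 1 := by
            rw [← Real.exp_nat_mul]
            congr 1
            field_simp
        _ ≤ (k:ℝ)^k * 8 := by
            have h5 := Real.exp_one_lt_d9
            have h6 : (0:ℝ) ≤ (k:ℝ)^k := by positivity
            nlinarith
        _ = 8 * (k:ℝ)^k := by ring
    have h7 : (0:ℝ) ≤ (k:ℝ) + 1 := by positivity
    have h8 : ((k:ℝ)+1) * ((k:ℝ)+1)^k ≤ ((k:ℝ)+1) * (8 * (k:ℝ)^k) :=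
      mul_le_mul_of_nonneg_left h1 h7
    have h9 : ((k:ℝ)+1) * (8 * (k:ℝ)^k) ≤ ((k:ℝ)+1) * (8 * (8^k * k.factorial)) := by
      have := mul_le_mul_of_nonneg_left ih (by norm_num : (0:ℝ) ≤ 8)
      exact mul_le_mul_of_nonneg_left this h7
    calc ((k+1:ℕ):ℝ)^(k+1) = ((k:ℝ)+1) * ((k:ℝ)+1)^k := by push_cast; ring
      _ ≤ ((k:ℝ)+1) * (8 * (8^k * k.factorial)) := h8.trans h9
      _ = 8^(k+1) * (((k:ℝ)+1) * k.factorial) := by ring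
      _ = 8^(k+1) * ((k+1).factorial : ℝ) := by
          rw [Nat.factorial_succ]; push_cast; ring

/-- distance tail bound in Case 3: let `t` be even, `t > 6`,
`r ≤ t < n/2`, `d > 3n/8` and `t - r < p ≤ (n-r)/2`.  Let `Δ` be a random vector in
`{0,1}ⁿ` whose coordinates in a set `T` of size `p + r` are `t`-wise independent uniform
bits and whose remaining coordinates are fixed, and let `δ*` agree with `Δ` on the fixed
coordinates.  Then `Pr[d_H(Δ,δ*) ≥ d] ≤ (t / (n (d/n - 3/8)²))^{t/2}`. -/
theorem case3_distance_tail_bound (n t d p r : ℕ)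
    (ht_even : Even t) (ht : 6 < t) (hrt : r ≤ t) (htn : 2 * t < n)
    (hd : 3 * n < 8 * d) (hpr_lo : t < p + r) (hpr_hi : 2 * p ≤ n - r)
    (T : Finset (Fin n)) (hT : T.card = p + r)
    (Δ : PMF (Fin n → ZMod 2))
    (hindep : ∀ S : Finset (Fin n), S ⊆ T → S.card ≤ t → ∀ v : Fin n → ZMod 2,
      prob Δ (fun x => ∀ i ∈ S, x i = v i) = (2 : ℝ≥0∞)⁻¹ ^ S.card)
    (fix : Fin n → ZMod 2)
    (hfix : ∀ x ∈ Δ.support, ∀ i ∉ T, x i = fix i)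
    (δstar : Fin n → ZMod 2)
    (hδstar : ∀ i ∉ T, δstar i = fix i) :
    prob Δ (fun x => d ≤ hammingDist x δstar)
      ≤ ((t : ℝ≥0∞) / ((n : ℝ≥0∞) * ((d : ℝ≥0∞) / (n : ℝ≥0∞) - 3 / 8) ^ 2)) ^ (t / 2) := by
  classical
  set m := p + r with hm
  set k := t / 2 with hkdef
  have hk2 : 2 * k = t := by
    rcases ht_even with ⟨c, hc⟩; omega
  have hn0 : 0 < n := by omega
  have hmn : 4 * m < 3 * n := by omega
  have hmd : m < 2 * d := by omega
  have hkm : k ≤ m := by omega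
  have hmlen : m ≤ n := by omega
  have hn' : (0:ℝ) < n := by exact_mod_cast hn0
  set a : ℝ := (d:ℝ) - (m:ℝ) / 2 with ha
  set cc : ℝ := (d:ℝ)/(n:ℝ) - 3/8 with hcc
  have hmd' : (m:ℝ) < 2*(d:ℝ) := by exact_mod_cast hmd
  have hmn' : 4*(m:ℝ) < 3*(n:ℝ) := by exact_mod_cast hmn
  have hd' : 3*(n:ℝ) < 8*(d:ℝ) := by exact_mod_cast hd
  have ha0 : 0 < a := by rw [ha]; linarith
  have hncc_eq : (n:ℝ) * cc = (d:ℝ) - 3*(n:ℝ)/8 := by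
    rw [hcc]; field_simp
  have hcc0 : 0 < cc := by
    have h := hncc_eq
    by_contra hle
    push_neg at hle
    have h2 : (n:ℝ)*cc ≤ 0 := mul_nonpos_of_nonneg_of_nonpos hn'.le hle
    rw [h] at h2
    linarith
  have hnca : (n:ℝ) * cc ≤ a := by rw [hncc_eq, ha]; linarith
  -- the index set for the multinomial expansion
  set G0 : Finset (Fin t → Fin n) := Fintype.piFinset (fun _ : Fin t => T) with hG0
  -- expansion of the t-th moment
  have hexpand : ∑ x : Fin n → ZMod 2, (Δ x).toReal * (∑ i ∈ T, Yv δstar i (x i)) ^ t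
      = ∑ g ∈ G0, ∑ x : Fin n → ZMod 2, (Δ x).toReal * ∏ j : Fin t, Yv δstar (g j) (x (g j)) := by
    have hpow : ∀ x : Fin n → ZMod 2, (∑ i ∈ T, Yv δstar i (x i)) ^ t
        = ∑ g ∈ G0, ∏ j : Fin t, Yv δstar (g j) (x (g j)) := by
      intro x
      calc (∑ i ∈ T, Yv δstar i (x i)) ^ t
          = ∏ _j : Fin t, ∑ i ∈ T, Yv δstar i (x i) := by
            rw [Finset.prod_const, Finset.card_univ, Fintype.card_fin]
        _ = ∑ g ∈ G0, ∏ j : Fin t, Yv δstar (g j) (x (g j)) := by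
            rw [hG0]
            exact Finset.prod_univ_sum (fun _ => T) (fun j i => Yv δstar i (x i))
    calc ∑ x : Fin n → ZMod 2, (Δ x).toReal * (∑ i ∈ T, Yv δstar i (x i)) ^ t
        = ∑ x : Fin n → ZMod 2, ∑ g ∈ G0,
            (Δ x).toReal * ∏ j : Fin t, Yv δstar (g j) (x (g j)) := by
          refine Finset.sum_congr rfl fun x _ => ?_
          rw [hpow x, Finset.mul_sum]
      _ = _ := Finset.sum_comm
  -- evaluation of each term of the expansion
  have hAg : ∀ g ∈ G0, (∑ x : Fin n → ZMod 2, (Δ x).toReal * ∏ j : Fin t, Yv δstar (g j) (x (g j)))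
      = if (∀ i ∈ Finset.image g Finset.univ,
            Even ((Finset.univ.filter (fun j => g j = i)).card)) then (1/2:ℝ)^t else 0 := by
    intro g hg
    have hgT : ∀ j, g j ∈ T := fun j => (Fintype.mem_piFinset.1 hg) j
    have hmaps : ∀ j ∈ (Finset.univ : Finset (Fin t)), g j ∈ Finset.image g Finset.univ :=
      fun j _ => Finset.mem_image_of_mem g (Finset.mem_univ j)
    have hsum_mult : ∑ i ∈ Finset.image g Finset.univ,
        (Finset.univ.filter (fun j => g j = i)).card = t := by
      have h1 := Finset.card_eq_sum_card_fiberwise hmaps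
      rw [Finset.card_univ, Fintype.card_fin] at h1
      exact h1.symm
    have hprod : ∀ x : Fin n → ZMod 2, ∏ j : Fin t, Yv δstar (g j) (x (g j))
        = ∏ i ∈ Finset.image g Finset.univ,
            (Yv δstar i (x i)) ^ ((Finset.univ.filter (fun j => g j = i)).card) := by
      intro x
      rw [← Finset.prod_fiberwise_of_maps_to hmaps (fun j => Yv δstar (g j) (x (g j)))]
      refine Finset.prod_congr rfl fun i _ => ?_
      have he : ∀ j ∈ Finset.univ.filter (fun j => g j = i),
          Yv δstar (g j) (x (g j)) = Yv δstar i (x i) := by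
        intro j hj
        rw [(Finset.mem_filter.1 hj).2]
      rw [Finset.prod_congr rfl he, Finset.prod_const]
    have hIT : Finset.image g Finset.univ ⊆ T := by
      intro i hi
      obtain ⟨j, _, rfl⟩ := Finset.mem_image.1 hi
      exact hgT j
    have hIcard : (Finset.image g Finset.univ).card ≤ t := by
      calc (Finset.image g Finset.univ).card ≤ (Finset.univ : Finset (Fin t)).card :=
            Finset.card_image_le
        _ = t := by rw [Finset.card_univ, Fintype.card_fin]
    have hup := uniform_prod T Δ hindep (Finset.image g Finset.univ) hIT hIcard
      (fun i b => (Yv δstar i b) ^ ((Finset.univ.filter (fun j => g j = i)).card))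
    rw [Finset.sum_congr rfl fun x _ => by rw [hprod x], hup]
    by_cases hP : ∀ i ∈ Finset.image g Finset.univ,
        Even ((Finset.univ.filter (fun j => g j = i)).card)
    · rw [if_pos hP]
      have heach : ∀ i ∈ Finset.image g Finset.univ,
          (Yv δstar i 0 ^ ((Finset.univ.filter (fun j => g j = i)).card)
            + Yv δstar i 1 ^ ((Finset.univ.filter (fun j => g j = i)).card))
          = 2 * (1/2:ℝ) ^ ((Finset.univ.filter (fun j => g j = i)).card) := by
        intro i hi
        rw [Yv_sum_pow, if_pos (hP i hi)]
      rw [Finset.prod_congr rfl heach, Finset.prod_mul_distrib, Finset.prod_const,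
        Finset.prod_pow_eq_pow_sum, hsum_mult]
      have hone : (1/2:ℝ) ^ (Finset.image g Finset.univ).card
          * 2 ^ (Finset.image g Finset.univ).card = 1 := by
        rw [← mul_pow]
        norm_num
      rw [← mul_assoc, hone, one_mul]
    · rw [if_neg hP]
      push_neg at hP
      obtain ⟨i, hiI, hodd⟩ := hP
      have hzero : Yv δstar i 0 ^ ((Finset.univ.filter (fun j => g j = i)).card)
          + Yv δstar i 1 ^ ((Finset.univ.filter (fun j => g j = i)).card) = 0 := by
        rw [Yv_sum_pow, if_neg hodd]
      rw [Finset.prod_eq_zero hiI hzero, mul_zero]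
  -- counting the surviving terms
  have hcount : ((G0.filter (fun g => ∀ i ∈ Finset.image g Finset.univ,
      Even ((Finset.univ.filter (fun j => g j = i)).card))).card : ℝ)
      ≤ (m.choose k : ℝ) * (k:ℝ)^t := by
    have hnat : (G0.filter (fun g => ∀ i ∈ Finset.image g Finset.univ,
        Even ((Finset.univ.filter (fun j => g j = i)).card))).card ≤ m.choose k * k ^ t := by
      have hsub : G0.filter (fun g => ∀ i ∈ Finset.image g Finset.univ,
          Even ((Finset.univ.filter (fun j => g j = i)).card))
          ⊆ (Finset.powersetCard k T).biUnion
            (fun U => Fintype.piFinset (fun _ : Fin t => U)) := by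
        intro g hgmem
        obtain ⟨hgG, hgP⟩ := Finset.mem_filter.1 hgmem
        have hgT : ∀ j, g j ∈ T := fun j => (Fintype.mem_piFinset.1 hgG) j
        have hmaps : ∀ j ∈ (Finset.univ : Finset (Fin t)), g j ∈ Finset.image g Finset.univ :=
          fun j _ => Finset.mem_image_of_mem g (Finset.mem_univ j)
        have hIT : Finset.image g Finset.univ ⊆ T := by
          intro i hi
          obtain ⟨j, _, rfl⟩ := Finset.mem_image.1 hi
          exact hgT j
        have hfib : ∀ i ∈ Finset.image g Finset.univ,
            2 ≤ (Finset.univ.filter (fun j => g j = i)).card := by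
          intro i hi
          have h1 : 0 < (Finset.univ.filter (fun j => g j = i)).card := by
            obtain ⟨j, _, rfl⟩ := Finset.mem_image.1 hi
            exact Finset.card_pos.2 ⟨j, Finset.mem_filter.2 ⟨Finset.mem_univ j, rfl⟩⟩
          obtain ⟨ch, hch⟩ := hgP i hi
          omega
        have hIcard : (Finset.image g Finset.univ).card ≤ k := by
          have h2 : (Finset.image g Finset.univ).card • 2
              ≤ ∑ i ∈ Finset.image g Finset.univ,
                  (Finset.univ.filter (fun j => g j = i)).card :=
            Finset.card_nsmul_le_sum _ _ _ hfib
          have h3 := Finset.card_eq_sum_card_fiberwise hmaps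
          rw [Finset.card_univ, Fintype.card_fin] at h3
          rw [smul_eq_mul] at h2
          omega
        obtain ⟨U, hIU, hUT, hUcard⟩ := Finset.exists_subsuperset_card_eq hIT hIcard
          (by rw [hT]; exact hkm)
        refine Finset.mem_biUnion.2 ⟨U, Finset.mem_powersetCard.2 ⟨hUT, hUcard⟩, ?_⟩
        exact Fintype.mem_piFinset.2 fun j => hIU (Finset.mem_image_of_mem g (Finset.mem_univ j))
      calc (G0.filter _).card ≤ _ := Finset.card_le_card hsub
        _ ≤ ∑ U ∈ Finset.powersetCard k T, (Fintype.piFinset (fun _ : Fin t => U)).card :=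
            Finset.card_biUnion_le
        _ ≤ ∑ _U ∈ Finset.powersetCard k T, k ^ t := by
            refine Finset.sum_le_sum fun U hU => ?_
            rw [Fintype.card_piFinset, Finset.prod_const, Finset.card_univ, Fintype.card_fin,
              (Finset.mem_powersetCard.1 hU).2]
        _ = m.choose k * k ^ t := by
            rw [Finset.sum_const, smul_eq_mul, Finset.card_powersetCard, hT]
    calc ((G0.filter _).card : ℝ) ≤ ((m.choose k * k ^ t : ℕ) : ℝ) := by exact_mod_cast hnat
      _ = (m.choose k : ℝ) * (k:ℝ)^t := by push_cast; ring
  -- the moment bound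
  have hEbound : ∑ x : Fin n → ZMod 2, (Δ x).toReal * (∑ i ∈ T, Yv δstar i (x i)) ^ t
      ≤ (m.choose k : ℝ) * (k:ℝ)^t * (1/2:ℝ)^t := by
    rw [hexpand]
    calc ∑ g ∈ G0, ∑ x : Fin n → ZMod 2, (Δ x).toReal * ∏ j : Fin t, Yv δstar (g j) (x (g j))
        = ∑ g ∈ G0, (if (∀ i ∈ Finset.image g Finset.univ,
            Even ((Finset.univ.filter (fun j => g j = i)).card)) then (1/2:ℝ)^t else 0) :=
          Finset.sum_congr rfl hAg
      _ = ∑ _g ∈ G0.filter (fun g => ∀ i ∈ Finset.image g Finset.univ,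
            Even ((Finset.univ.filter (fun j => g j = i)).card)), (1/2:ℝ)^t :=
          (Finset.sum_filter _ _).symm
      _ = ((G0.filter (fun g => ∀ i ∈ Finset.image g Finset.univ,
            Even ((Finset.univ.filter (fun j => g j = i)).card))).card : ℝ) * (1/2:ℝ)^t := by
          rw [Finset.sum_const, nsmul_eq_mul]
      _ ≤ (m.choose k : ℝ) * (k:ℝ)^t * (1/2:ℝ)^t :=
          mul_le_mul_of_nonneg_right hcount (by positivity)
  -- Markov's inequality for the t-th moment
  have hPle : (prob Δ (fun x => d ≤ hammingDist x δstar)).toReal * a ^ t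
      ≤ ∑ x : Fin n → ZMod 2, (Δ x).toReal * (∑ i ∈ T, Yv δstar i (x i)) ^ t := by
    rw [prob_toReal, Finset.sum_mul]
    refine Finset.sum_le_sum fun x _ => ?_
    by_cases hx : d ≤ hammingDist x δstar
    · rw [if_pos hx]
      rcases eq_or_ne (Δ x) 0 with h0 | h0
      · rw [h0]
        simp only [ENNReal.toReal_zero, zero_mul]
        try exact le_rfl
      · have hxsupp : x ∈ Δ.support := by rwa [PMF.mem_support_iff]
        have hdist : hammingDist x δstar = (T.filter (fun i => x i ≠ δstar i)).card := by
          have h1 : hammingDist x δstar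
              = (Finset.univ.filter (fun i => x i ≠ δstar i)).card := rfl
          rw [h1]
          congr 1
          ext i
          simp only [Finset.mem_filter, Finset.mem_univ, true_and]
          constructor
          · intro hne
            refine ⟨?_, hne⟩
            by_contra hiT
            exact hne (by rw [hfix x hxsupp i hiT, hδstar i hiT])
          · exact fun h => h.2
        have hcards := Finset.card_filter_add_card_filter_not
          (s := T) (p := fun i => x i ≠ δstar i)
        have hSfeq : ∑ i ∈ T, Yv δstar i (x i)
            = ((T.filter (fun i => x i ≠ δstar i)).card : ℝ) - (m:ℝ)/2 := by
          rw [← Finset.sum_filter_add_sum_filter_not T (fun i => x i ≠ δstar i)]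
          have e1 : ∀ i ∈ T.filter (fun i => x i ≠ δstar i), Yv δstar i (x i) = (1/2:ℝ) := by
            intro i hi
            rw [Yv, if_neg (Finset.mem_filter.1 hi).2]
          have e2 : ∀ i ∈ T.filter (fun i => ¬ x i ≠ δstar i), Yv δstar i (x i) = -(1/2:ℝ) := by
            intro i hi
            rw [Yv, if_pos (not_not.1 (Finset.mem_filter.1 hi).2)]
          rw [Finset.sum_congr rfl e1, Finset.sum_congr rfl e2, Finset.sum_const,
            Finset.sum_const, nsmul_eq_mul, nsmul_eq_mul]
          have hc2 : ((T.filter (fun i => ¬ x i ≠ δstar i)).card : ℝ)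
              = (m:ℝ) - ((T.filter (fun i => x i ≠ δstar i)).card : ℝ) := by
            have : (T.filter (fun i => x i ≠ δstar i)).card
                + (T.filter (fun i => ¬ x i ≠ δstar i)).card = m := by rw [hcards, hT]
            have := congrArg (fun z : ℕ => (z : ℝ)) this
            push_cast at this
            linarith
          rw [hc2]
          ring
        have hdle : (d:ℝ) ≤ ((T.filter (fun i => x i ≠ δstar i)).card : ℝ) := by
          rw [hdist] at hx
          exact_mod_cast hx
        have hSfge : a ≤ ∑ i ∈ T, Yv δstar i (x i) := by
          rw [hSfeq, ha]
          linarith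
        exact mul_le_mul_of_nonneg_left (pow_le_pow_left₀ ha0.le hSfge t) ENNReal.toReal_nonneg
    · rw [if_neg hx, zero_mul]
      exact mul_nonneg ENNReal.toReal_nonneg (ht_even.pow_nonneg _)
  -- numeric conclusion in ℝ
  have hfinal_real : (prob Δ (fun x => d ≤ hammingDist x δstar)).toReal
      ≤ ((t:ℝ)/((n:ℝ)*cc^2))^k := by
    have hat : (0:ℝ) < a ^ t := pow_pos ha0 t
    have h1 : (prob Δ (fun x => d ≤ hammingDist x δstar)).toReal
        ≤ ((m.choose k : ℝ) * (k:ℝ)^t * (1/2:ℝ)^t) / a^t := by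
      rw [le_div_iff₀ hat]
      exact hPle.trans hEbound
    have ht2 : t = 2*k := hk2.symm
    have key : (m.choose k : ℝ) * (k:ℝ)^(2*k) ≤ (4 * ((n:ℝ) * (t:ℝ))) ^ k := by
      have c1 : (m.choose k : ℝ) * (k.factorial : ℝ) ≤ (n:ℝ)^k := by
        have hnat2 : m.choose k * k.factorial ≤ n ^ k := by
          calc m.choose k * k.factorial = k.factorial * m.choose k := mul_comm _ _
            _ = m.descFactorial k := (Nat.descFactorial_eq_factorial_mul_choose m k).symm
            _ ≤ m ^ k := Nat.descFactorial_le_pow m k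
            _ ≤ n ^ k := Nat.pow_le_pow_left hmlen k
        exact_mod_cast hnat2
      have c2 := pow_le_eight_pow_mul_factorial k
      have hfact : (0:ℝ) < (k.factorial : ℝ) := by exact_mod_cast k.factorial_pos
      have hkk : (0:ℝ) ≤ (k:ℝ)^k := by positivity
      have hstep : (m.choose k : ℝ) * (k:ℝ)^(2*k) * (k.factorial : ℝ)
          ≤ (4 * ((n:ℝ) * (t:ℝ))) ^ k * (k.factorial : ℝ) := by
        have e1 : (m.choose k : ℝ) * (k:ℝ)^(2*k) * (k.factorial : ℝ)
            = ((m.choose k : ℝ) * (k.factorial : ℝ)) * (k:ℝ)^k * (k:ℝ)^k := by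
          rw [two_mul, pow_add]
          ring
        have e2 : (4 * ((n:ℝ) * (t:ℝ))) ^ k * (k.factorial : ℝ)
            = (n:ℝ)^k * (k:ℝ)^k * (8^k * (k.factorial : ℝ)) := by
          rw [ht2]
          push_cast
          rw [show (4 * ((n:ℝ) * (2*(k:ℝ))))^k = (8:ℝ)^k * (n:ℝ)^k * (k:ℝ)^k  by
            rw [← mul_pow, ← mul_pow]; ring_nf]
          ring
        rw [e1, e2]
        have hA : ((m.choose k : ℝ) * (k.factorial : ℝ)) * (k:ℝ)^k ≤ (n:ℝ)^k * (k:ℝ)^k :=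
          mul_le_mul_of_nonneg_right c1 hkk
        exact mul_le_mul hA c2 hkk (by positivity)
      exact le_of_mul_le_mul_right hstep hfact
    have h2 : ((m.choose k : ℝ) * (k:ℝ)^t * (1/2:ℝ)^t) / a^t ≤ ((n:ℝ)*(t:ℝ)/a^2)^k := by
      have e2 : ((1:ℝ)/2)^t = ((1:ℝ)/4)^k := by
        rw [ht2, pow_mul]
        norm_num
      have e3 : a^t = (a^2)^k := by rw [ht2, pow_mul]
      have ha2 : (0:ℝ) < (a^2)^k := by positivity
      have e5 : ((n:ℝ)*(t:ℝ)/a^2)^k = ((n:ℝ)*(t:ℝ))^k/(a^2)^k := div_pow _ _ _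
      have hnum : (m.choose k : ℝ) * (k:ℝ)^t * ((1:ℝ)/4)^k ≤ ((n:ℝ)*(t:ℝ))^k := by
        have e6 : (k:ℝ)^t = (k:ℝ)^(2*k) := by rw [hk2]
        have e4 : ((n:ℝ)*(t:ℝ))^k = (4 * ((n:ℝ) * (t:ℝ)))^k * ((1:ℝ)/4)^k := by
          rw [← mul_pow]
          congr 1
          ring
        rw [e6, e4]
        exact mul_le_mul_of_nonneg_right key (by positivity)
      rw [e2, e3, e5]
      exact (div_le_div_iff_of_pos_right ha2).2 hnum
    have h3 : ((n:ℝ)*(t:ℝ)/a^2)^k ≤ ((t:ℝ)/((n:ℝ)*cc^2))^k := by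
      apply pow_le_pow_left₀ (by positivity)
      have hncc : (0:ℝ) < (n:ℝ)*cc := by positivity
      have ha2' : ((n:ℝ)*cc)^2 ≤ a^2 := pow_le_pow_left₀ hncc.le hnca 2
      rw [div_le_div_iff₀ (by positivity) (by positivity)]
      calc (n:ℝ)*(t:ℝ)*((n:ℝ)*cc^2) = (t:ℝ)*((n:ℝ)*cc)^2 := by ring
        _ ≤ (t:ℝ)*a^2 := mul_le_mul_of_nonneg_left ha2' (by positivity)
    exact h1.trans (h2.trans h3)
  -- transfer to ℝ≥0∞
  have hne : prob Δ (fun x => d ≤ hammingDist x δstar) ≠ ⊤ := prob_ne_top _ _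
  rw [← ENNReal.ofReal_toReal hne]
  have hb0 : (0:ℝ) ≤ (t:ℝ)/((n:ℝ)*cc^2) := by positivity
  calc ENNReal.ofReal (prob Δ (fun x => d ≤ hammingDist x δstar)).toReal
      ≤ ENNReal.ofReal (((t:ℝ)/((n:ℝ)*cc^2))^k) := ENNReal.ofReal_le_ofReal hfinal_real
    _ = ((t : ℝ≥0∞) / ((n : ℝ≥0∞) * ((d : ℝ≥0∞) / (n : ℝ≥0∞) - 3 / 8) ^ 2)) ^ k := by
        rw [ENNReal.ofReal_pow hb0]
        congr 1
        rw [ENNReal.ofReal_div_of_pos (by positivity), ENNReal.ofReal_natCast]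
        congr 1
        rw [ENNReal.ofReal_mul (by positivity), ENNReal.ofReal_natCast]
        congr 1
        rw [ENNReal.ofReal_pow hcc0.le]
        congr 1
        rw [hcc, ENNReal.ofReal_sub _ (by norm_num : (0:ℝ) ≤ 3/8)]
        congr 1
        · rw [ENNReal.ofReal_div_of_pos hn', ENNReal.ofReal_natCast, ENNReal.ofReal_natCast]
        · rw [ENNReal.ofReal_div_of_pos (by norm_num : (0:ℝ) < 8)]
          norm_num
end
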